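/- Let A be a satisfiable finite set of atomic comparisons over V and let b₁, …, bₘ be closed semi-interval ACs (each of the form x ≤ c or x ≥ c for a variable x and real constant c). If A entails the disjunction b₁ ∨ … ∨ bₘ, then there exist indices i and j (possibly equal) such that A entails bᵢ ∨ bⱼ; i.e., any such containment implication in minimal form has at most two ACs on its right-hand side. -/
import Mathlib


namespace QC

/-- A term is a variable in `V` or a real constant. -/
inductive Term (V : Type) where
  | var : V → Term V
  | const : ℝ → Term V

/-- The comparison relations `<, ≤, =, ≠`. -/
inductive Rel where
  | lt | le | eq | ne

/-- A comparison between two terms.  (`x ≥ c` is represented as `c ≤ x`, etc.) -/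
structure Comp (V : Type) where
  rel : Rel
  lhs : Term V
  rhs : Term V

def Term.eval {V : Type} (σ : V → ℝ) : Term V → ℝ
  | .var x => σ x
  | .const c => c

def Rel.holds : Rel → ℝ → ℝ → Prop
  | .lt => fun a b => a < b
  | .le => fun a b => a ≤ b
  | .eq => fun a b => a = b
  | .ne => fun a b => a ≠ b

/-- An assignment `σ : V → ℝ` satisfies a comparison. -/
def Comp.holds {V : Type} (a : Comp V) (σ : V → ℝ) : Prop :=
  a.rel.holds (a.lhs.eval σ) (a.rhs.eval σ)

def Term.isVar {V : Type} : Term V → Prop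
  | .var _ => True
  | .const _ => False

/-- An atomic comparison: at least one side is a variable. -/
def IsAC {V : Type} (a : Comp V) : Prop := a.lhs.isVar ∨ a.rhs.isVar

/-- `σ` satisfies every comparison in the finite set `F`. -/
def Sat {V : Type} (F : Finset (Comp V)) (σ : V → ℝ) : Prop := ∀ a ∈ F, a.holds σ

/-- A closed LSI comparison: `x ≤ c`. -/
def IsClosedLSI {V : Type} (a : Comp V) : Prop :=
  ∃ (x : V) (c : ℝ), a = ⟨Rel.le, Term.var x, Term.const c⟩

/-- An open LSI comparison: `x < c`. -/
def IsOpenLSI {V : Type} (a : Comp V) : Prop :=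
  ∃ (x : V) (c : ℝ), a = ⟨Rel.lt, Term.var x, Term.const c⟩

/-- A closed RSI comparison: `x ≥ c`, represented as `c ≤ x`. -/
def IsClosedRSI {V : Type} (a : Comp V) : Prop :=
  ∃ (x : V) (c : ℝ), a = ⟨Rel.le, Term.const c, Term.var x⟩

/-- An open RSI comparison: `x > c`, represented as `c < x`. -/
def IsOpenRSI {V : Type} (a : Comp V) : Prop :=
  ∃ (x : V) (c : ℝ), a = ⟨Rel.lt, Term.const c, Term.var x⟩

/-- Convex mixture of two assignments. -/
def mix {V : Type} (σ τ : V → ℝ) (ε : ℝ) : V → ℝ := fun v => (1 - ε) * σ v + ε * τ v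

lemma mix_eval {V : Type} (σ τ : V → ℝ) (ε : ℝ) (t : Term V) :
    Term.eval (mix σ τ ε) t = (1 - ε) * Term.eval σ t + ε * Term.eval τ t := by
  cases t <;> simp [mix, Term.eval] <;> ring

lemma key_lt (p q r s : ℝ) (h : p < q) :
    ∀ᶠ ε in nhdsWithin (0:ℝ) (Set.Ioi 0), (1 - ε) * p + ε * r < (1 - ε) * q + ε * s := by
  have hc : Continuous fun ε : ℝ => ((1 - ε) * q + ε * s) - ((1 - ε) * p + ε * r) := by
    fun_prop
  have h0 := hc.tendsto 0
  have hval : ((1 - (0:ℝ)) * q + 0 * s) - ((1 - (0:ℝ)) * p + 0 * r) = q - p := by ring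
  rw [hval] at h0
  have ht := h0.mono_left (nhdsWithin_le_nhds (s := Set.Ioi (0:ℝ)))
  have := ht.eventually_const_lt (show (0:ℝ) < q - p by linarith)
  filter_upwards [this] with ε hε
  linarith

/-- Proposition 13.2: if a satisfiable finite set `A` of atomic
comparisons entails a disjunction of closed semi-interval comparisons
`b₁ ∨ … ∨ bₘ`, then it entails a disjunction of at most two of them. -/
theorem stmt14 {V : Type} (A : Finset (Comp V))
    (hAC : ∀ a ∈ A, IsAC a)
    (hsat : ∃ σ : V → ℝ, Sat A σ)
    (m : ℕ) (b : Fin m → Comp V)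
    (hSI : ∀ j, IsClosedLSI (b j) ∨ IsClosedRSI (b j))
    (hent : ∀ σ : V → ℝ, Sat A σ → ∃ j, (b j).holds σ) :
    ∃ i j : Fin m, ∀ σ : V → ℝ, Sat A σ → (b i).holds σ ∨ (b j).holds σ := by
  rcases Nat.eq_zero_or_pos m with hm | hm
  · subst hm
    obtain ⟨σ₀, hσ₀⟩ := hsat
    obtain ⟨j, -⟩ := hent σ₀ hσ₀
    exact j.elim0
  by_contra hcon
  push_neg at hcon
  choose w hwS hwi hwj using hcon
  obtain ⟨ρ, hρ⟩ := hsat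
  have hne : (Finset.univ : Finset (Fin m)).Nonempty := ⟨⟨0, hm⟩, Finset.mem_univ _⟩
  set σs : V → ℝ :=
    fun v => Finset.univ.inf' hne (fun j => Finset.univ.sup' hne (fun i => w i j v)) with hσs
  set L := nhdsWithin (0:ℝ) (Set.Ioi 0) with hL
  -- evaluation of terms at σs
  have evalstar : ∀ t : Term V, Term.eval σs t =
      Finset.univ.inf' hne (fun j => Finset.univ.sup' hne (fun i => Term.eval (w i j) t)) := by
    intro t
    cases t with
    | var x => rfl
    | const c => simp [Term.eval]
  have hmono_le : ∀ f g : Fin m → Fin m → ℝ, (∀ i j, f i j ≤ g i j) →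
      Finset.univ.inf' hne (fun j => Finset.univ.sup' hne (fun i => f i j)) ≤
      Finset.univ.inf' hne (fun j => Finset.univ.sup' hne (fun i => g i j)) := by
    intro f g h
    apply Finset.le_inf'
    intro j _
    refine le_trans (Finset.inf'_le _ (Finset.mem_univ j)) ?_
    apply Finset.sup'_le
    intro i _
    exact le_trans (h i j) (Finset.le_sup' (fun i => g i j) (Finset.mem_univ i))
  have hmono_lt : ∀ f g : Fin m → Fin m → ℝ, (∀ i j, f i j < g i j) →
      Finset.univ.inf' hne (fun j => Finset.univ.sup' hne (fun i => f i j)) <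
      Finset.univ.inf' hne (fun j => Finset.univ.sup' hne (fun i => g i j)) := by
    intro f g h
    rw [Finset.lt_inf'_iff]
    intro j _
    refine lt_of_le_of_lt (Finset.inf'_le _ (Finset.mem_univ j)) ?_
    rw [Finset.sup'_lt_iff]
    intro i _
    exact lt_of_lt_of_le (h i j) (Finset.le_sup' (fun i => g i j) (Finset.mem_univ i))
  have hpos : ∀ᶠ ε in L, (0:ℝ) < ε := eventually_mem_nhdsWithin
  have hlt1 : ∀ᶠ ε in L, ε < (1:ℝ) :=
    Filter.Eventually.filter_mono (nhdsWithin_le_nhds) (eventually_lt_nhds (by norm_num))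
  -- A is eventually satisfied by the mixture
  have hA : ∀ᶠ ε in L, Sat A (mix σs ρ ε) := by
    rw [show (fun ε => Sat A (mix σs ρ ε)) = fun ε => ∀ a ∈ A, a.holds (mix σs ρ ε) from rfl]
    rw [Filter.eventually_all_finset]
    intro a ha
    have hstar : ∀ i j, a.holds (w i j) := fun i j => hwS i j a ha
    have hρa : a.holds ρ := hρ a ha
    obtain ⟨rel, t₁, t₂⟩ := a
    simp only [Comp.holds] at hstar hρa ⊢
    cases rel with
    | le =>
      simp only [Rel.holds] at hstar hρa ⊢
      have h1 : Term.eval σs t₁ ≤ Term.eval σs t₂ := by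
        rw [evalstar, evalstar]
        exact hmono_le _ _ hstar
      filter_upwards [hpos, hlt1] with ε hε hε1
      rw [mix_eval, mix_eval]
      have h2 := mul_le_mul_of_nonneg_left h1 (show (0:ℝ) ≤ 1 - ε by linarith)
      have h3 := mul_le_mul_of_nonneg_left hρa (le_of_lt hε)
      linarith
    | eq =>
      simp only [Rel.holds] at hstar hρa ⊢
      have h1 : Term.eval σs t₁ = Term.eval σs t₂ := by
        rw [evalstar, evalstar]
        exact le_antisymm (hmono_le _ _ (fun i j => le_of_eq (hstar i j)))
          (hmono_le _ _ (fun i j => le_of_eq (hstar i j).symm))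
      filter_upwards with ε
      rw [mix_eval, mix_eval, h1, hρa]
    | lt =>
      simp only [Rel.holds] at hstar hρa ⊢
      have h1 : Term.eval σs t₁ < Term.eval σs t₂ := by
        rw [evalstar, evalstar]
        exact hmono_lt _ _ hstar
      filter_upwards [key_lt _ _ (Term.eval ρ t₁) (Term.eval ρ t₂) h1] with ε hε
      rw [mix_eval, mix_eval]
      exact hε
    | ne =>
      simp only [Rel.holds] at hstar hρa ⊢
      by_cases hp : Term.eval σs t₁ = Term.eval σs t₂
      · filter_upwards [hpos] with ε hε heq
        rw [mix_eval, mix_eval, hp] at heq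
        have : ε * Term.eval ρ t₁ = ε * Term.eval ρ t₂ := by linarith
        exact hρa (mul_left_cancel₀ (ne_of_gt hε) this)
      · have hc : Continuous fun ε : ℝ =>
            ((1 - ε) * Term.eval σs t₁ + ε * Term.eval ρ t₁) -
            ((1 - ε) * Term.eval σs t₂ + ε * Term.eval ρ t₂) := by fun_prop
        have h0 := hc.tendsto 0
        have hval : ((1 - (0:ℝ)) * Term.eval σs t₁ + 0 * Term.eval ρ t₁) -
            ((1 - (0:ℝ)) * Term.eval σs t₂ + 0 * Term.eval ρ t₂)
            = Term.eval σs t₁ - Term.eval σs t₂ := by ring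
        rw [hval] at h0
        have ht := h0.mono_left (nhdsWithin_le_nhds (s := Set.Ioi (0:ℝ)))
        have := ht.eventually_ne (sub_ne_zero.mpr hp)
        filter_upwards [this] with ε hε heq
        rw [mix_eval, mix_eval] at heq
        exact hε (by linarith)
  -- all b j are eventually violated by the mixture
  have hB : ∀ᶠ ε in L, ∀ j, ¬ (b j).holds (mix σs ρ ε) := by
    rw [Filter.eventually_all]
    intro j
    rcases hSI j with ⟨x, c, hb⟩ | ⟨x, c, hb⟩
    · -- LSI : x ≤ c, violated since c < σs x
      have hst : c < σs x := by
        show c < Finset.univ.inf' hne (fun j' => Finset.univ.sup' hne (fun i => w i j' x))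
        rw [Finset.lt_inf'_iff]
        intro j' _
        rw [Finset.lt_sup'_iff]
        refine ⟨j, Finset.mem_univ j, ?_⟩
        have hv := hwi j j'
        rw [hb] at hv
        simp only [Comp.holds, Rel.holds, Term.eval] at hv
        exact not_le.mp hv
      filter_upwards [key_lt c (σs x) c (ρ x) hst] with ε hε
      rw [hb]
      simp only [Comp.holds, Rel.holds, Term.eval]
      intro hle
      have hmx : mix σs ρ ε x = (1 - ε) * σs x + ε * ρ x := rfl
      rw [hmx] at hle
      have : (1 - ε) * c + ε * c = c := by ring
      linarith
    · -- RSI : c ≤ x, violated since σs x < c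
      have hst : σs x < c := by
        show Finset.univ.inf' hne (fun j' => Finset.univ.sup' hne (fun i => w i j' x)) < c
        rw [Finset.inf'_lt_iff]
        refine ⟨j, Finset.mem_univ j, ?_⟩
        rw [Finset.sup'_lt_iff]
        intro i _
        have hv := hwj i j
        rw [hb] at hv
        simp only [Comp.holds, Rel.holds, Term.eval] at hv
        exact not_le.mp hv
      filter_upwards [key_lt (σs x) c (ρ x) c hst] with ε hε
      rw [hb]
      simp only [Comp.holds, Rel.holds, Term.eval]
      intro hle
      have hmx : mix σs ρ ε x = (1 - ε) * σs x + ε * ρ x := rfl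
      rw [hmx] at hle
      have : (1 - ε) * c + ε * c = c := by ring
      linarith
  obtain ⟨ε, hSatε, hBε⟩ := (hA.and hB).exists
  obtain ⟨j, hj⟩ := hent (mix σs ρ ε) hSatε
  exact hBε j hj

end QC
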